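/- Let E > 0, let T_A > T_B > 0, and let 2 ≤ n_A ≤ n_B be natural numbers. On (ℂ²)^{⊗(n_A+n_B)} with standard basis {e_b : b ∈ {0,1}^{n_A+n_B}}, let H be the diagonal Hamiltonian with H e_b = E · wgt(b) · e_b (wgt = Hamming weight), and let ρ = γ_{T_A}^{⊗ n_A} ⊗ γ_{T_B}^{⊗ n_B}, where γ_T = diag(1, e^{−E/T})/(1 + e^{−E/T}). Then there exists a unitary U with tr(U ρ U† H) < tr(ρ H) if and only if T_A/T_B > n_A/(n_A − 1). -/

import Mathlib

open Finset Matrix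

/-- The Gibbs occupation probability of level `j ∈ {0,1}` of a two-level
system with energy gap `E` at temperature `T`. -/
noncomputable def qubitProb (E T : ℝ) (j : Fin 2) : ℝ :=
  (if j = 0 then 1 else Real.exp (-E / T)) / (1 + Real.exp (-E / T))

namespace Stmt9Aux






lemma card_between (n a b : ℕ) (hb : b ≤ n) :
    (Finset.univ.filter fun i : Fin n => ¬ (i:ℕ) < a ∧ (i:ℕ) < b).card = b - a := by
  rw [← Nat.card_Ico a b]
  refine Finset.card_bij (fun i _ => (i : ℕ)) ?_ ?_ ?_
  · intro i hi; simp only [Finset.mem_filter] at hi; simp [Finset.mem_Ico]; omega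
  · intro i hi j hj hij; exact Fin.val_injective hij
  · intro j hj; simp only [Finset.mem_Ico] at hj
    exact ⟨⟨j, lt_of_lt_of_le hj.2 hb⟩, by simp; omega, rfl⟩

lemma card_lt (n b : ℕ) (hb : b ≤ n) :
    (Finset.univ.filter fun i : Fin n => (i:ℕ) < b).card = b := by
  have h := card_between n 0 b hb
  simpa using h

lemma trace_diag_re {ι : Type*} [Fintype ι] [DecidableEq ι] (p h : ι → ℝ) :
    (Matrix.trace (Matrix.diagonal (fun b => (p b : ℂ)) * Matrix.diagonal (fun b => (h b : ℂ)))).re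
      = ∑ b, p b * h b := by
  rw [Matrix.diagonal_mul_diagonal, Matrix.trace_diagonal]
  rw [Complex.re_sum]
  simp

lemma trace_conj_re {ι : Type*} [Fintype ι] [DecidableEq ι] (U : Matrix ι ι ℂ) (p h : ι → ℝ) :
    (Matrix.trace (U * Matrix.diagonal (fun b => (p b : ℂ)) * star U * Matrix.diagonal (fun b => (h b : ℂ)))).re
      = ∑ b, ∑ c, Complex.normSq (U b c) * (p c * h b) := by
  have h1 : ∀ (A : Matrix ι ι ℂ) (d : ι → ℂ), (A * Matrix.diagonal d).trace = ∑ b, A b b * d b := by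
    intro A d; simp [Matrix.trace, Matrix.mul_diagonal, Matrix.diag]
  rw [h1]
  have h2 : ∀ b, (U * Matrix.diagonal (fun b => (p b : ℂ)) * star U) b b
      = ∑ c, ((Complex.normSq (U b c) * p c : ℝ) : ℂ) := by
    intro b
    rw [Matrix.mul_apply]
    congr 1; ext c
    rw [Matrix.mul_diagonal, Matrix.star_apply]
    simp only [RCLike.star_def]
    push_cast
    rw [← Complex.mul_conj]
    ring
  calc (∑ b, (U * Matrix.diagonal (fun b => (p b : ℂ)) * star U) b b * (h b : ℂ)).re
      = (∑ b, ((∑ c, Complex.normSq (U b c) * p c * h b : ℝ) : ℂ)).re := by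
        congr 1; apply Finset.sum_congr rfl; intro b _
        rw [h2]; push_cast; rw [Finset.sum_mul]
    _ = ∑ b, ∑ c, Complex.normSq (U b c) * (p c * h b) := by
        rw [Complex.re_sum]; simp [mul_assoc]









lemma passivity_step {ι : Type*} [Fintype ι] [DecidableEq ι] (D : ι → ι → ℝ) (p : ι → ℝ)
    (w : ι → ℕ) (k : ℕ)
    (hD0 : ∀ b c, 0 ≤ D b c) (hrow : ∀ b, ∑ c, D b c = 1) (hcol : ∀ c, ∑ b, D b c = 1)
    (hz : ∃ b, w b = 0)
    (hmono : ∀ b c, w b < w c → p c ≤ p b) :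
    ∑ b ∈ Finset.univ.filter (fun b => k < w b), p b
      ≤ ∑ b ∈ Finset.univ.filter (fun b => k < w b), ∑ c, D b c * p c := by
  set S := Finset.univ.filter (fun b => k < w b) with hS
  obtain ⟨b0, hb0⟩ := hz
  have hb0S : b0 ∉ S := by simp [hS, hb0]
  have hne : (Finset.univ.filter (fun b => ¬ k < w b)).Nonempty :=
    ⟨b0, by simp [hb0]⟩
  set m := (Finset.univ.filter (fun b => ¬ k < w b)).inf' hne p with hm
  have hmS : ∀ b ∈ S, p b ≤ m := by
    intro b hb
    obtain ⟨b', hb', hmeq⟩ := Finset.exists_mem_eq_inf' hne p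
    rw [hm, hmeq]
    simp only [Finset.mem_filter, hS] at hb hb'
    exact hmono b' b (by omega)
  have hmSc : ∀ b, b ∉ S → m ≤ p b := by
    intro b hb
    apply Finset.inf'_le
    simp only [Finset.mem_filter, hS] at hb ⊢
    simpa using hb
  set cc := fun c => ∑ b ∈ S, D b c with hcc
  have hcc0 : ∀ c, 0 ≤ cc c := fun c => Finset.sum_nonneg fun b _ => hD0 b c
  have hcc1 : ∀ c, cc c ≤ 1 := by
    intro c
    rw [← hcol c]
    exact Finset.sum_le_sum_of_subset_of_nonneg (Finset.subset_univ S)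
      (fun b _ _ => hD0 b c)
  have hccsum : ∑ c, cc c = (S.card : ℝ) := by
    rw [hcc, Finset.sum_comm]
    simp [hrow]
  have hqS : ∑ b ∈ S, ∑ c, D b c * p c = ∑ c, cc c * p c := by
    rw [Finset.sum_comm]
    simp [hcc, Finset.sum_mul]
  rw [hqS]
  have key : ∑ c, ((if c ∈ S then p c else 0) + (cc c - if c ∈ S then 1 else 0) * m)
      ≤ ∑ c, cc c * p c := by
    apply Finset.sum_le_sum
    intro c _
    by_cases hc : c ∈ S
    · simp only [hc, if_true]
      nlinarith [hmS c hc, hcc1 c]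
    · simp only [hc, if_false]
      nlinarith [hmSc c hc, hcc0 c]
  calc ∑ b ∈ S, p b
      = ∑ c, ((if c ∈ S then p c else 0) + (cc c - if c ∈ S then 1 else 0) * m) := by
        rw [Finset.sum_add_distrib, Finset.sum_ite_mem, Finset.univ_inter]
        have hz2 : ∑ x : ι, (cc x - if x ∈ S then (1:ℝ) else 0) * m = 0 := by
          rw [← Finset.sum_mul]
          have : ∑ x : ι, (cc x - if x ∈ S then (1:ℝ) else 0) = 0 := by
            rw [Finset.sum_sub_distrib, hccsum]
            simp [Finset.sum_ite_mem]
          rw [this, zero_mul]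
        rw [hz2, add_zero]
    _ ≤ ∑ c, cc c * p c := key





lemma passivity {ι : Type*} [Fintype ι] [DecidableEq ι] (D : ι → ι → ℝ) (p : ι → ℝ)
    (w : ι → ℕ) (N : ℕ)
    (hD0 : ∀ b c, 0 ≤ D b c) (hrow : ∀ b, ∑ c, D b c = 1) (hcol : ∀ c, ∑ b, D b c = 1)
    (hwN : ∀ b, w b ≤ N) (hz : ∃ b, w b = 0)
    (hmono : ∀ b c, w b < w c → p c ≤ p b) :
    ∑ b, p b * (w b : ℝ) ≤ ∑ b, ∑ c, D b c * (p c * (w b : ℝ)) := by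
  have hw : ∀ b, ((w b : ℕ) : ℝ) = ∑ k ∈ Finset.range N, if k < w b then (1:ℝ) else 0 := by
    intro b
    rw [Finset.sum_boole]
    have : Finset.filter (fun k => k < w b) (Finset.range N) = Finset.range (w b) := by
      ext k
      simp only [Finset.mem_filter, Finset.mem_range]
      have := hwN b; omega
    rw [this, Finset.card_range]
  have layer : ∀ f : ι → ℝ, ∑ b, f b * ((w b : ℕ) : ℝ)
      = ∑ k ∈ Finset.range N, ∑ b ∈ Finset.univ.filter (fun b => k < w b), f b := by
    intro f
    simp_rw [hw, Finset.mul_sum, mul_ite, mul_one, mul_zero]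
    rw [Finset.sum_comm]
    apply Finset.sum_congr rfl
    intro k _
    rw [Finset.sum_filter]
  have hq : ∀ b, ∑ c, D b c * (p c * (w b:ℝ)) = (∑ c, D b c * p c) * ((w b : ℕ):ℝ) := by
    intro b; rw [Finset.sum_mul]; apply Finset.sum_congr rfl; intros; ring
  simp_rw [hq]
  rw [layer p, layer (fun b => ∑ c, D b c * p c)]
  apply Finset.sum_le_sum
  intro k _
  exact passivity_step D p w k hD0 hrow hcol hz hmono










lemma permU_unitary {ι : Type*} [Fintype ι] [DecidableEq ι] (σ : Equiv.Perm ι) :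
    (fun b c => if σ b = c then (1:ℂ) else 0) ∈ Matrix.unitaryGroup ι ℂ := by
  change Matrix.of (fun b c => if σ b = c then (1:ℂ) else 0) ∈ Matrix.unitaryGroup ι ℂ
  rw [Matrix.mem_unitaryGroup_iff]
  ext b c
  simp only [Matrix.mul_apply, Matrix.star_apply, Matrix.one_apply]
  simp [Matrix.of_apply, apply_ite (starRingEnd ℂ), ite_mul, Finset.sum_ite_eq' ,
    EmbeddingLike.apply_eq_iff_eq, eq_comm]

lemma permU_conj {ι : Type*} [Fintype ι] [DecidableEq ι] (σ : Equiv.Perm ι) (p : ι → ℂ) :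
    (Matrix.of fun b c => if σ b = c then (1:ℂ) else 0) * Matrix.diagonal p *
      star (Matrix.of fun b c => if σ b = c then (1:ℂ) else 0)
      = Matrix.diagonal (fun b => p (σ b)) := by
  ext b c
  simp only [Matrix.mul_apply, Matrix.mul_diagonal, Matrix.star_apply, Matrix.of_apply,
    Matrix.diagonal_apply]
  simp [apply_ite (starRingEnd ℂ), ite_mul, mul_ite, Finset.sum_ite_eq',
    EmbeddingLike.apply_eq_iff_eq, eq_comm]
  split <;> simp_all

-- Gibbs product in exponential form
lemma qubitProb_eq (E T : ℝ) (j : Fin 2) :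
    qubitProb E T j = Real.exp (-(E / T) * ((j:ℕ):ℝ)) * (1 + Real.exp (-E / T))⁻¹ := by
  fin_cases j <;> simp [qubitProb, div_eq_mul_inv, neg_div]

lemma prod_qubitProb {n : ℕ} (E : ℝ) (Tf : Fin n → ℝ) (b : Fin n → Fin 2) :
    ∏ i, qubitProb E (Tf i) (b i)
      = (∏ i, (1 + Real.exp (-E / Tf i))⁻¹) * Real.exp (∑ i, -(E / Tf i) * ((b i : ℕ):ℝ)) := by
  rw [Real.exp_sum, ← Finset.prod_mul_distrib]
  apply Finset.prod_congr rfl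
  intro i _
  rw [qubitProb_eq]
  ring










lemma key_ineq (T_A T_B nAr ab cb ac cc : ℝ) (hTB : 0 < T_B) (hT : T_B < T_A)
    (hK : (nAr - 1) * T_A ≤ nAr * T_B) (hab : 0 ≤ ab) (hac : 0 ≤ ac) (hacn : ac ≤ nAr)
    (hcb : 0 ≤ cb) (hcc : 0 ≤ cc) (hsum : ab + cb + 1 ≤ ac + cc) :
    ab * T_B + cb * T_A ≤ ac * T_B + cc * T_A := by
  rcases le_or_gt ac ab with hcase | hcase
  · nlinarith [mul_nonneg (sub_nonneg.2 hcase) (sub_nonneg.2 hT.le)]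
  · nlinarith [mul_le_mul_of_nonneg_right (show ac - ab ≤ nAr by linarith) (sub_nonneg.2 hT.le)]

lemma split_sum {n nA : ℕ} (u v : ℝ) (x : Fin n → Fin 2) :
    ∑ i : Fin n, (if (i:ℕ) < nA then u else v) * ((x i : ℕ):ℝ)
      = u * (∑ i ∈ Finset.univ.filter (fun i : Fin n => (i:ℕ) < nA), ((x i : ℕ):ℝ))
      + v * (∑ i ∈ Finset.univ.filter (fun i : Fin n => ¬ (i:ℕ) < nA), ((x i : ℕ):ℝ)) := by
  rw [← Finset.sum_filter_add_sum_filter_not Finset.univ (fun i : Fin n => (i:ℕ) < nA)]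
  rw [Finset.mul_sum, Finset.mul_sum]
  congr 1 <;> apply Finset.sum_congr rfl <;> intro i hi <;>
    simp only [Finset.mem_filter] at hi <;> simp [hi.2]

lemma p_antivary (E T_A T_B : ℝ) (nA nB : ℕ) (hE : 0 < E) (hTB : 0 < T_B) (hT : T_B < T_A)
    (hnA : 2 ≤ nA)
    (hK : ((nA:ℝ) - 1) * T_A ≤ (nA:ℝ) * T_B)
    (b c : Fin (nA + nB) → Fin 2)
    (hwlt : (∑ i, ((b i : ℕ))) < ∑ i, ((c i : ℕ))) :
    ∏ i : Fin (nA+nB), qubitProb E (if (i:ℕ) < nA then T_A else T_B) (c i)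
      ≤ ∏ i : Fin (nA+nB), qubitProb E (if (i:ℕ) < nA then T_A else T_B) (b i) := by
  have hTA : 0 < T_A := hTB.trans hT
  have hnAn : nA ≤ nA + nB := Nat.le_add_right _ _
  have eb : ∏ i : Fin (nA+nB), qubitProb E (if (i:ℕ) < nA then T_A else T_B) (b i)
      = (∏ i : Fin (nA+nB), (1 + Real.exp (-E / (if (i:ℕ) < nA then T_A else T_B)))⁻¹)
        * Real.exp (∑ i : Fin (nA+nB), -(E / (if (i:ℕ) < nA then T_A else T_B)) * ((b i : ℕ):ℝ)) :=
    prod_qubitProb E _ b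
  have ec : ∏ i : Fin (nA+nB), qubitProb E (if (i:ℕ) < nA then T_A else T_B) (c i)
      = (∏ i : Fin (nA+nB), (1 + Real.exp (-E / (if (i:ℕ) < nA then T_A else T_B)))⁻¹)
        * Real.exp (∑ i : Fin (nA+nB), -(E / (if (i:ℕ) < nA then T_A else T_B)) * ((c i : ℕ):ℝ)) :=
    prod_qubitProb E _ c
  rw [eb, ec]
  have hC : (0:ℝ) < ∏ i : Fin (nA+nB), (1 + Real.exp (-E / (if (i:ℕ) < nA then T_A else T_B)))⁻¹ := by
    apply Finset.prod_pos; intro i _; positivity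
  apply mul_le_mul_of_nonneg_left _ hC.le
  rw [Real.exp_le_exp]
  have hite : ∀ x : Fin (nA+nB) → Fin 2, ∀ i : Fin (nA+nB),
      -(E / (if (i:ℕ) < nA then T_A else T_B)) * ((x i : ℕ):ℝ)
        = (if (i:ℕ) < nA then -(E/T_A) else -(E/T_B)) * ((x i : ℕ):ℝ) := by
    intro x i; split <;> rfl
  simp only [hite]
  rw [split_sum, split_sum]
  set A := Finset.univ.filter (fun i : Fin (nA+nB) => (i:ℕ) < nA) with hA
  set Ac := Finset.univ.filter (fun i : Fin (nA+nB) => ¬ (i:ℕ) < nA) with hAc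
  set ab := ∑ i ∈ A, ((b i : ℕ):ℝ) with hab'
  set cb := ∑ i ∈ Ac, ((b i : ℕ):ℝ)
  set ac := ∑ i ∈ A, ((c i : ℕ):ℝ)
  set cc := ∑ i ∈ Ac, ((c i : ℕ):ℝ)
  have bound : ∀ x : Fin (nA+nB) → Fin 2, ∑ i ∈ A, ((x i : ℕ):ℝ) ≤ (nA:ℝ) := by
    intro x
    calc ∑ i ∈ A, ((x i : ℕ):ℝ) ≤ ∑ i ∈ A, (1:ℝ) := by
          apply Finset.sum_le_sum; intro i _; exact_mod_cast Fin.is_le (x i)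
      _ = (nA:ℝ) := by rw [Finset.sum_const, card_lt _ _ hnAn]; simp
  have nn : ∀ (s : Finset (Fin (nA+nB))) (x : Fin (nA+nB) → Fin 2),
      (0:ℝ) ≤ ∑ i ∈ s, ((x i : ℕ):ℝ) := by
    intro s x; positivity
  have hsum : ab + cb + 1 ≤ ac + cc := by
    have hbsplit : ab + cb = ∑ i : Fin (nA+nB), ((b i : ℕ):ℝ) :=
      Finset.sum_filter_add_sum_filter_not _ _ _
    have hcsplit : ac + cc = ∑ i : Fin (nA+nB), ((c i : ℕ):ℝ) :=
      Finset.sum_filter_add_sum_filter_not _ _ _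
    rw [hbsplit, hcsplit, ← Nat.cast_sum, ← Nat.cast_sum]
    have : (∑ i, ((b i : ℕ))) + 1 ≤ ∑ i, ((c i : ℕ)) := hwlt
    exact_mod_cast this
  have key : ab * T_B + cb * T_A ≤ ac * T_B + cc * T_A :=
    key_ineq T_A T_B (nA:ℝ) ab cb ac cc hTB hT hK (nn A b) (nn A c) (bound c)
      (nn Ac b) (nn Ac c) hsum
  have hpos : (0:ℝ) < E / (T_A * T_B) := div_pos hE (mul_pos hTA hTB)
  have expand : ∀ X Y : ℝ, (E / (T_A * T_B)) * (X * T_B + Y * T_A)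
      = -((-(E/T_A)) * X + (-(E/T_B)) * Y) := by
    intro X Y; field_simp; ring
  have := mul_le_mul_of_nonneg_left key hpos.le
  rw [expand, expand] at this
  linarith



end Stmt9Aux

open Stmt9Aux

/-- **Complexity of Using Small Temperature Gaps, case `n_A ≤ n_B`.**
On `n_A` hot and `n_B` cold equal-gap qubits, a unitary heat engine exists if
and only if `T_A/T_B > n_A/(n_A - 1)`. -/
theorem stmt_9 (E T_A T_B : ℝ) (hE : 0 < E) (hTB : 0 < T_B) (hT : T_B < T_A)
    (nA nB : ℕ) (hnA : 2 ≤ nA) (hn : nA ≤ nB) :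
    (∃ U ∈ Matrix.unitaryGroup (Fin (nA + nB) → Fin 2) ℂ,
      (Matrix.trace (U *
          Matrix.diagonal (fun b : Fin (nA + nB) → Fin 2 =>
            ((∏ i : Fin (nA + nB), qubitProb E (if (i : ℕ) < nA then T_A else T_B) (b i) : ℝ) : ℂ)) *
          star U *
          Matrix.diagonal (fun b : Fin (nA + nB) → Fin 2 =>
            ((E * ∑ i, ((b i : ℕ) : ℝ) : ℝ) : ℂ)))).re <
      (Matrix.trace (
          Matrix.diagonal (fun b : Fin (nA + nB) → Fin 2 =>
            ((∏ i : Fin (nA + nB), qubitProb E (if (i : ℕ) < nA then T_A else T_B) (b i) : ℝ) : ℂ)) *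
          Matrix.diagonal (fun b : Fin (nA + nB) → Fin 2 =>
            ((E * ∑ i, ((b i : ℕ) : ℝ) : ℝ) : ℂ)))).re) ↔
    (nA : ℝ) / ((nA : ℝ) - 1) < T_A / T_B := by
  have hTA : 0 < T_A := hTB.trans hT
  have hnAr : (0:ℝ) < (nA:ℝ) - 1 := by
    have : (2:ℝ) ≤ (nA:ℝ) := by exact_mod_cast hnA
    linarith
  set pRf : (Fin (nA + nB) → Fin 2) → ℝ :=
    fun b => ∏ i : Fin (nA + nB), qubitProb E (if (i : ℕ) < nA then T_A else T_B) (b i)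
    with hpRf
  set hRf : (Fin (nA + nB) → Fin 2) → ℝ :=
    fun b => E * ∑ i, ((b i : ℕ) : ℝ) with hhRf
  constructor
  · rintro ⟨U, hU, hlt⟩
    by_contra hcon
    push_neg at hcon
    have hK : ((nA:ℝ) - 1) * T_A ≤ (nA:ℝ) * T_B := by
      rw [div_le_div_iff₀ hTB hnAr] at hcon
      linarith
    have hlt2 : (∑ b, ∑ c, Complex.normSq (U b c) * (pRf c * hRf b)) < ∑ b, pRf b * hRf b := by
      rw [← trace_conj_re U pRf hRf, ← trace_diag_re pRf hRf]
      exact hlt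
    -- passivity data
    have hUU : U * star U = 1 := Matrix.mem_unitaryGroup_iff.1 hU
    have hUU' : star U * U = 1 := Matrix.mem_unitaryGroup_iff'.1 hU
    have hrow : ∀ b, ∑ c, Complex.normSq (U b c) = 1 := by
      intro b
      have h1 : (U * star U) b b = (1 : Matrix _ _ ℂ) b b := by rw [hUU]
      rw [Matrix.mul_apply] at h1
      simp only [Matrix.star_apply, Matrix.one_apply_eq, RCLike.star_def,
        Complex.mul_conj] at h1
      exact_mod_cast h1
    have hcol : ∀ c, ∑ b, Complex.normSq (U b c) = 1 := by
      intro c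
      have h1 : (star U * U) c c = (1 : Matrix _ _ ℂ) c c := by rw [hUU']
      rw [Matrix.mul_apply] at h1
      simp only [Matrix.star_apply, Matrix.one_apply_eq, RCLike.star_def] at h1
      have h2 : ∀ b : Fin (nA+nB) → Fin 2,
          (starRingEnd ℂ) (U b c) * U b c = (Complex.normSq (U b c) : ℂ) := by
        intro b; rw [mul_comm, Complex.mul_conj]
      rw [Finset.sum_congr rfl fun b _ => h2 b] at h1
      exact_mod_cast h1
    set w : (Fin (nA + nB) → Fin 2) → ℕ := fun b => ∑ i, (b i : ℕ) with hwdef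
    have hwN : ∀ b, w b ≤ nA + nB := by
      intro b
      calc w b ≤ ∑ _i : Fin (nA+nB), 1 :=
            Finset.sum_le_sum fun i _ => Fin.is_le (b i)
        _ = nA + nB := by simp
    have hmono : ∀ b c, w b < w c → pRf c ≤ pRf b := by
      intro b c hbc
      exact p_antivary E T_A T_B nA nB hE hTB hT hnA hK b c hbc
    have hpass := passivity (fun b c => Complex.normSq (U b c)) pRf w (nA + nB)
      (fun b c => Complex.normSq_nonneg _) hrow hcol hwN
      ⟨fun _ => 0, by simp [hwdef]⟩ hmono
    have e1 : ∑ b, pRf b * hRf b = E * ∑ b, pRf b * ((w b : ℕ) : ℝ) := by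
      rw [Finset.mul_sum]
      apply Finset.sum_congr rfl
      intro b _
      rw [hhRf, hwdef]
      push_cast
      ring
    have e2 : (∑ b, ∑ c, Complex.normSq (U b c) * (pRf c * hRf b))
        = E * ∑ b, ∑ c, Complex.normSq (U b c) * (pRf c * ((w b : ℕ) : ℝ)) := by
      rw [Finset.mul_sum]
      apply Finset.sum_congr rfl
      intro b _
      rw [Finset.mul_sum]
      apply Finset.sum_congr rfl
      intro c _
      rw [hhRf, hwdef]
      push_cast
      ring
    rw [e1, e2] at hlt2
    have := mul_le_mul_of_nonneg_left hpass hE.le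
    linarith
  · intro hratio
    have hratio' : (nA:ℝ) * T_B < T_A * ((nA:ℝ) - 1) := by
      rw [div_lt_div_iff₀ hnAr hTB] at hratio
      exact hratio
    set b0 : Fin (nA + nB) → Fin 2 := fun i => if (i:ℕ) < nA then 1 else 0 with hb0def
    set b1 : Fin (nA + nB) → Fin 2 :=
      fun i => if (i:ℕ) < nA then 0 else if (i:ℕ) < 2 * nA - 1 then 1 else 0 with hb1def
    have hne01 : b0 ≠ b1 := by
      intro hcontra
      have h0 := congrFun hcontra ⟨0, by omega⟩
      have hpos : 0 < nA := by omega
      rw [hb0def, hb1def] at h0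
      simp [hpos] at h0
    have hcard1 : (Finset.univ.filter fun i : Fin (nA+nB) => (i:ℕ) < nA).card = nA :=
      card_lt _ _ (Nat.le_add_right _ _)
    have hcard2 : (Finset.univ.filter fun i : Fin (nA+nB) =>
        ¬ (i:ℕ) < nA ∧ (i:ℕ) < 2 * nA - 1).card = nA - 1 := by
      rw [card_between _ _ _ (by omega)]
      omega
    have hw0 : (∑ i, ((b0 i : ℕ))) = nA := by
      have hv : ∀ i : Fin (nA+nB), ((b0 i : ℕ)) = if (i:ℕ) < nA then 1 else 0 := by
        intro i; simp only [hb0def]; split <;> rfl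
      simp_rw [hv]
      rw [Finset.sum_ite, Finset.sum_const, Finset.sum_const_zero, add_zero,
        smul_eq_mul, mul_one, hcard1]
    have hw1 : (∑ i, ((b1 i : ℕ))) = nA - 1 := by
      have hv : ∀ i : Fin (nA+nB), ((b1 i : ℕ))
          = if ¬ (i:ℕ) < nA ∧ (i:ℕ) < 2 * nA - 1 then 1 else 0 := by
        intro i; rw [hb1def]
        by_cases h1 : (i:ℕ) < nA <;> by_cases h2 : (i:ℕ) < 2 * nA - 1 <;> simp [h1, h2]
      simp_rw [hv]
      rw [Finset.sum_ite, Finset.sum_const, Finset.sum_const_zero, add_zero,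
        smul_eq_mul, mul_one, hcard2]
    have hh01 : hRf b1 < hRf b0 := by
      rw [hhRf]
      simp only
      rw [← Nat.cast_sum, ← Nat.cast_sum, hw0, hw1]
      have : ((nA - 1 : ℕ) : ℝ) < (nA : ℝ) := by
        have : nA - 1 < nA := by omega
        exact_mod_cast this
      exact mul_lt_mul_of_pos_left this hE
    -- exponent computations
    have hS0 : ∑ i : Fin (nA+nB), -(E / (if (i:ℕ) < nA then T_A else T_B)) * ((b0 i : ℕ):ℝ)
        = (nA:ℝ) * -(E/T_A) := by
      have hv : ∀ i : Fin (nA+nB), -(E / (if (i:ℕ) < nA then T_A else T_B)) * ((b0 i : ℕ):ℝ)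
          = if (i:ℕ) < nA then -(E/T_A) else 0 := by
        intro i; rw [hb0def]; by_cases h1 : (i:ℕ) < nA <;> simp [h1]
      simp_rw [hv]
      rw [Finset.sum_ite, Finset.sum_const, Finset.sum_const_zero, add_zero, hcard1,
        nsmul_eq_mul]
    have hS1 : ∑ i : Fin (nA+nB), -(E / (if (i:ℕ) < nA then T_A else T_B)) * ((b1 i : ℕ):ℝ)
        = ((nA:ℝ) - 1) * -(E/T_B) := by
      have hv : ∀ i : Fin (nA+nB), -(E / (if (i:ℕ) < nA then T_A else T_B)) * ((b1 i : ℕ):ℝ)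
          = if ¬ (i:ℕ) < nA ∧ (i:ℕ) < 2 * nA - 1 then -(E/T_B) else 0 := by
        intro i; rw [hb1def]
        by_cases h1 : (i:ℕ) < nA <;> by_cases h2 : (i:ℕ) < 2 * nA - 1 <;> simp [h1, h2]
      simp_rw [hv]
      rw [Finset.sum_ite, Finset.sum_const, Finset.sum_const_zero, add_zero, hcard2,
        nsmul_eq_mul, Nat.cast_sub (by omega : 1 ≤ nA)]
      norm_num
    have hC : (0:ℝ) < ∏ i : Fin (nA+nB),
        (1 + Real.exp (-E / (if (i:ℕ) < nA then T_A else T_B)))⁻¹ := by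
      apply Finset.prod_pos; intro i _; positivity
    have e0 : pRf b0 = (∏ i : Fin (nA+nB), (1 + Real.exp (-E / (if (i:ℕ) < nA then T_A else T_B)))⁻¹)
        * Real.exp (∑ i : Fin (nA+nB), -(E / (if (i:ℕ) < nA then T_A else T_B)) * ((b0 i : ℕ):ℝ)) :=
      prod_qubitProb E _ b0
    have e1 : pRf b1 = (∏ i : Fin (nA+nB), (1 + Real.exp (-E / (if (i:ℕ) < nA then T_A else T_B)))⁻¹)
        * Real.exp (∑ i : Fin (nA+nB), -(E / (if (i:ℕ) < nA then T_A else T_B)) * ((b1 i : ℕ):ℝ)) :=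
      prod_qubitProb E _ b1
    have hSlt : ((nA:ℝ) - 1) * -(E/T_B) < (nA:ℝ) * -(E/T_A) := by
      have h1 : (nA:ℝ) * (E/T_A) < ((nA:ℝ) - 1) * (E/T_B) := by
        rw [show (nA:ℝ) * (E/T_A) = ((nA:ℝ) * E)/T_A by ring,
          show ((nA:ℝ) - 1) * (E/T_B) = (((nA:ℝ) - 1) * E)/T_B by ring,
          div_lt_div_iff₀ hTA hTB]
        nlinarith [mul_lt_mul_of_pos_right hratio' hE]
      linarith
    have hp01 : pRf b1 < pRf b0 := by
      rw [e0, e1, hS0, hS1]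
      exact mul_lt_mul_of_pos_left (Real.exp_lt_exp.2 hSlt) hC
    -- the swap unitary
    refine ⟨Matrix.of fun b c => if (Equiv.swap b0 b1) b = c then (1:ℂ) else 0,
      permU_unitary _, ?_⟩
    have key : (∑ b, pRf ((Equiv.swap b0 b1) b) * hRf b) < ∑ b, pRf b * hRf b := by
      rw [← sub_pos, ← Finset.sum_sub_distrib]
      have hrestrict : ∑ b, (pRf b * hRf b - pRf ((Equiv.swap b0 b1) b) * hRf b)
          = ∑ b ∈ ({b0, b1} : Finset _), (pRf b * hRf b - pRf ((Equiv.swap b0 b1) b) * hRf b) := by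
        symm
        apply Finset.sum_subset (Finset.subset_univ _)
        intro b _ hb
        simp only [Finset.mem_insert, Finset.mem_singleton, not_or] at hb
        rw [Equiv.swap_apply_of_ne_of_ne hb.1 hb.2, sub_self]
      rw [hrestrict, Finset.sum_pair hne01, Equiv.swap_apply_left, Equiv.swap_apply_right]
      nlinarith [mul_pos (sub_pos.2 hp01) (sub_pos.2 hh01)]
    have main : (Matrix.trace ((Matrix.of fun b c => if (Equiv.swap b0 b1) b = c then (1:ℂ) else 0) *
          Matrix.diagonal (fun b => ((pRf b : ℝ) : ℂ)) *
          star (Matrix.of fun b c => if (Equiv.swap b0 b1) b = c then (1:ℂ) else 0) *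
          Matrix.diagonal (fun b => ((hRf b : ℝ) : ℂ)))).re <
        (Matrix.trace (Matrix.diagonal (fun b => ((pRf b : ℝ) : ℂ)) *
          Matrix.diagonal (fun b => ((hRf b : ℝ) : ℂ)))).re := by
      rw [permU_conj (Equiv.swap b0 b1) (fun b => ((pRf b : ℝ) : ℂ))]
      rw [trace_diag_re pRf hRf]
      have e3 : (Matrix.trace (Matrix.diagonal (fun b => ((pRf ((Equiv.swap b0 b1) b) : ℝ) : ℂ)) *
          Matrix.diagonal (fun b => ((hRf b : ℝ) : ℂ)))).re
          = ∑ b, pRf ((Equiv.swap b0 b1) b) * hRf b :=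
        trace_diag_re (fun b => pRf ((Equiv.swap b0 b1) b)) hRf
      rw [show (Matrix.diagonal fun b => (fun b => ((pRf b : ℝ) : ℂ)) ((Equiv.swap b0 b1) b))
          = Matrix.diagonal (fun b => ((pRf ((Equiv.swap b0 b1) b) : ℝ) : ℂ)) from rfl]
      rw [e3]
      exact key
    exact main
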